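/- Let φ be an isometry of a Riemannian manifold, p a point with φ^{n_0}(p) = p for some positive integer n_0, and let K := {φ^i(p) : 0 ≤ i < n_0} be the finite orbit, contained in a region where metric balls are convex. Then there exists exactly one closed metric ball B_r(x) of minimal radius r containing K; in particular, if two balls of the same minimal radius r both contain K, their centers coincide. -/
import Mathlib

/-- Let `φ` be an isometry of a Riemannian manifold, `p` a
point with `φ^[n₀] p = p` for some positive integer `n₀`, and let
`K := {φ^[i] p : 0 ≤ i < n₀}` be the finite orbit, contained in a region `R`
where metric balls are convex.  Then there exists exactly one closed metric
ball `B_{r₀} x` of minimal radius `r₀` containing `K`; in particular, if two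
balls of the same minimal radius `r₀` both contain `K`, their centres
coincide. -/
theorem unique_minimal_enclosing_ball_of_finite_orbit
    {M : Type*} [MetricSpace M] [ProperSpace M]
    (φ : M → M) (hφ : Isometry φ)
    (p : M) (n₀ : ℕ) (hn₀ : 0 < n₀) (hper : φ^[n₀] p = p)
    (K : Set M) (hK : K = {x : M | ∃ i : ℕ, i < n₀ ∧ φ^[i] p = x})
    (R : Set M) (hKR : K ⊆ R)
    -- the Riemannian midpoint operation
    (mid : M → M → M)
    (hmid₁ : ∀ x y : M, dist x (mid x y) = dist x y / 2)
    (hmid₂ : ∀ x y : M, dist y (mid x y) = dist x y / 2)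
    -- convexity of metric balls, as seen from the region `R` containing `K`
    (hconv : ∀ (z x y : M) (r : ℝ), z ∈ R → x ≠ y →
      dist z x ≤ r → dist z y ≤ r → dist z (mid x y) < r)
    -- the minimal radius of a closed ball containing `K`
    (r₀ : ℝ) (hr₀ : r₀ = sInf {r : ℝ | ∃ x : M, K ⊆ Metric.closedBall x r}) :
    (∃! x : M, K ⊆ Metric.closedBall x r₀) ∧
      ∀ x₁ x₂ : M, K ⊆ Metric.closedBall x₁ r₀ →
        K ⊆ Metric.closedBall x₂ r₀ → x₁ = x₂ := by
  classical
  -- K as a finite set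
  set F : Finset M := (Finset.range n₀).image (fun i => φ^[i] p) with hF
  have hFne : F.Nonempty := ⟨p, by
    simp only [hF, Finset.mem_image]
    exact ⟨0, Finset.mem_range.2 hn₀, rfl⟩⟩
  have hKF : K = (F : Set M) := by
    rw [hK]; ext x
    simp [hF, Finset.mem_image, Finset.mem_range, eq_comm]
  have hpK : p ∈ K := by
    rw [hK]; exact ⟨0, hn₀, rfl⟩
  -- the radius function
  set f : M → ℝ := fun x => F.sup' hFne (fun z => dist z x) with hf
  have hball : ∀ x r, K ⊆ Metric.closedBall x r ↔ f x ≤ r := by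
    intro x r
    rw [hKF]
    constructor
    · intro h
      exact Finset.sup'_le _ _ fun z hz => h hz
    · intro h z hz
      exact le_trans (Finset.le_sup' (fun z => dist z x) hz) h
  have hfp : ∀ x, dist p x ≤ f x := fun x =>
    Finset.le_sup' (fun z => dist z x) (by rwa [← Finset.mem_coe, ← hKF])
  have hfc : Continuous f := by
    rw [continuous_iff_continuousAt]
    intro x
    exact ContinuousAt.finset_sup'_apply hFne fun z _ =>
      (continuous_dist.comp (continuous_const.prodMk continuous_id)).continuousAt
  -- the minimum of f is attained
  have hcomp : IsCompact (Metric.closedBall p (f p)) := isCompact_closedBall p (f p)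
  have hne : (Metric.closedBall p (f p)).Nonempty :=
    ⟨p, Metric.mem_closedBall.2 (by simpa using hfp p)⟩
  obtain ⟨x₀, hx₀mem, hx₀min⟩ := hcomp.exists_isMinOn hne hfc.continuousOn
  have hglobal : ∀ x, f x₀ ≤ f x := by
    intro x
    by_cases hx : x ∈ Metric.closedBall p (f p)
    · exact hx₀min hx
    · have : f p < f x := by
        have := hfp x
        have hd : f p < dist p x := by
          simpa [Metric.mem_closedBall, dist_comm] using hx
        linarith
      exact le_trans (hx₀min (Metric.mem_closedBall.2 (by simpa using hfp p))) this.le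
  -- the set of admissible radii
  set S : Set ℝ := {r : ℝ | ∃ x : M, K ⊆ Metric.closedBall x r} with hS
  have hSbdd : BddBelow S := ⟨0, fun r hr => by
    obtain ⟨x, hx⟩ := hr
    have := hx hpK
    simp only [Metric.mem_closedBall] at this
    exact le_trans dist_nonneg this⟩
  have hSne : f x₀ ∈ S := ⟨x₀, (hball x₀ (f x₀)).2 le_rfl⟩
  have hr₀eq : r₀ = f x₀ := by
    rw [hr₀]
    apply le_antisymm (csInf_le hSbdd hSne)
    apply le_csInf ⟨f x₀, hSne⟩
    rintro r ⟨x, hx⟩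
    exact le_trans (hglobal x) ((hball x r).1 hx)
  -- main uniqueness claim
  have huniq : ∀ x₁ x₂ : M, K ⊆ Metric.closedBall x₁ r₀ →
      K ⊆ Metric.closedBall x₂ r₀ → x₁ = x₂ := by
    intro x₁ x₂ h₁ h₂
    by_contra hne12
    have hlt : f (mid x₁ x₂) < r₀ := by
      rw [hf]
      apply (Finset.sup'_lt_iff hFne).2
      intro z hz
      have hzK : z ∈ K := by rw [hKF]; exact hz
      exact hconv z x₁ x₂ r₀ (hKR hzK) hne12
        (Metric.mem_closedBall.1 (h₁ hzK)) (Metric.mem_closedBall.1 (h₂ hzK))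
    have : r₀ ≤ f (mid x₁ x₂) := by
      rw [hr₀]
      exact csInf_le hSbdd ⟨mid x₁ x₂, (hball _ _).2 le_rfl⟩
    linarith
  refine ⟨⟨x₀, (hball x₀ r₀).2 hr₀eq.ge, fun y hy => huniq y x₀ hy ((hball x₀ r₀).2 hr₀eq.ge)⟩, huniq⟩
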